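/- arXiv:0809.4964 — 10 statements merged into one kernel-verified Lean document; each statement's English description precedes it below -/
import Mathlib

section
/- A quasi-uniform space (X, 𝒰) is totally bounded if and only if every filter on X is doubly stable with respect to 𝒰. -/
open Filter Set

variable {X Y : Type*}

/-- Image of a set under a relation: `U(A) = {y : ∃ x ∈ A, (x,y) ∈ U}`. -/
def relImg (U : Set (X × X)) (A : Set X) : Set X := {y | ∃ x ∈ A, (x, y) ∈ U}

/-- Inverse image: `U⁻¹(A) = {y : ∃ x ∈ A, (y,x) ∈ U}`. -/
def relPre (U : Set (X × X)) (A : Set X) : Set X := {y | ∃ x ∈ A, (y, x) ∈ U}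

/-- A quasi-uniformity: a filter of reflexive relations, each containing
a relational square of a member. -/
structure IsQuasiUniformity (𝒰 : Filter (X × X)) : Prop where
  refl : ∀ U ∈ 𝒰, SetRel.id ⊆ U
  comp : ∀ U ∈ 𝒰, ∃ V ∈ 𝒰, SetRel.comp V V ⊆ U

/-- A filter is stable if `⋂_{F ∈ ℱ} U(F) ∈ ℱ` for all `U ∈ 𝒰`. -/
def IsStable (𝒰 : Filter (X × X)) (ℱ : Filter X) : Prop :=
  ∀ U ∈ 𝒰, (⋂ F ∈ ℱ.sets, relImg U F) ∈ ℱ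

/-- `U_ℱ = ⋂_{F ∈ ℱ} (U⁻¹(F) ∩ U(F))`. -/
def bigU (U : Set (X × X)) (ℱ : Filter X) : Set X :=
  ⋂ F ∈ ℱ.sets, (relPre U F ∩ relImg U F)

/-- A filter is doubly stable if `U_ℱ ∈ ℱ` for all `U ∈ 𝒰`. -/
def IsDoublyStable (𝒰 : Filter (X × X)) (ℱ : Filter X) : Prop :=
  ∀ U ∈ 𝒰, bigU U ℱ ∈ ℱ

/-- The conjugate relation. -/
def swapRel (U : Set (X × X)) : Set (X × X) := {p | (p.2, p.1) ∈ U}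

/-- Total boundedness: each symmetrized entourage admits a finite cover. -/
def IsTotallyBounded (𝒰 : Filter (X × X)) : Prop :=
  ∀ U ∈ 𝒰, ∃ 𝒜 : Set (Set X), 𝒜.Finite ∧ ⋃₀ 𝒜 = Set.univ ∧
    ∀ A ∈ 𝒜, A ×ˢ A ⊆ U ∩ swapRel U


lemma ultra_mem {𝒢 : Ultrafilter X} (V : Set (X × X)) {y : X}
    (hy : y ∈ bigU V (𝒢 : Filter X)) :
    {x | (y, x) ∈ V} ∈ 𝒢 ∧ {x | (x, y) ∈ V} ∈ 𝒢 := by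
  have h : ∀ G ∈ (𝒢 : Filter X), y ∈ relPre V G ∩ relImg V G := fun G hG =>
    Set.mem_iInter₂.mp hy G hG
  constructor
  · rcases 𝒢.mem_or_compl_mem {x | (y, x) ∈ V} with h1 | h1
    · exact h1
    · obtain ⟨x, hx, hyx⟩ := (h _ h1).1
      exact absurd hyx hx
  · rcases 𝒢.mem_or_compl_mem {x | (x, y) ∈ V} with h1 | h1
    · exact h1
    · obtain ⟨x, hx, hxy⟩ := (h _ h1).2
      exact absurd hxy hx

theorem stmt1 (𝒰 : Filter (X × X)) (h𝒰 : IsQuasiUniformity 𝒰) :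
    IsTotallyBounded 𝒰 ↔ ∀ ℱ : Filter X, ℱ.NeBot → IsDoublyStable 𝒰 ℱ := by
  classical
  constructor
  · intro htb ℱ hne U hU
    obtain ⟨𝒜, h𝒜fin, h𝒜cov, h𝒜sub⟩ := htb U hU
    set 𝒜' : Set (Set X) := {A ∈ 𝒜 | ∀ F ∈ ℱ.sets, (A ∩ F).Nonempty} with h𝒜'def
    have hbad : ∀ A ∈ 𝒜 \ 𝒜', ∃ F ∈ ℱ.sets, A ∩ F = ∅ := by
      intro A hA
      by_contra hcon
      push_neg at hcon
      exact hA.2 ⟨hA.1, fun F hF => hcon F hF⟩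
    choose! Ffun hF1 hF2 using hbad
    have hF0 : (⋂ A ∈ 𝒜 \ 𝒜', Ffun A) ∈ ℱ := by
      rw [Filter.biInter_mem (h𝒜fin.subset Set.diff_subset)]
      exact fun A hA => hF1 A hA
    refine Filter.mem_of_superset hF0 ?_
    intro x hx
    have hxuniv : x ∈ ⋃₀ 𝒜 := h𝒜cov ▸ Set.mem_univ x
    obtain ⟨A, hA, hxA⟩ := hxuniv
    have hA' : A ∈ 𝒜' := by
      by_contra hno
      have hxF : x ∈ Ffun A := Set.mem_iInter₂.mp hx A ⟨hA, hno⟩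
      have : x ∈ A ∩ Ffun A := ⟨hxA, hxF⟩
      rw [hF2 A ⟨hA, hno⟩] at this
      exact this
    refine Set.mem_iInter₂.mpr fun F hF => ?_
    obtain ⟨z, hzA, hzF⟩ := hA'.2 F hF
    exact ⟨⟨z, hzF, (h𝒜sub A hA (Set.mk_mem_prod hxA hzA)).1⟩,
      ⟨z, hzF, (h𝒜sub A hA (Set.mk_mem_prod hzA hxA)).1⟩⟩
  · intro h U hU
    obtain ⟨V, hV, hVcomp⟩ := h𝒰.comp U hU
    by_contra hcon
    push_neg at hcon
    set ℬ : Set (Set X) := {B | ∃ A, A ×ˢ A ⊆ U ∩ swapRel U ∧ B = Aᶜ} with hℬdef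
    have hgen : (Filter.generate ℬ).NeBot := by
      rw [Filter.generate_neBot_iff]
      intro t hts htfin
      by_contra hne
      rw [Set.not_nonempty_iff_eq_empty] at hne
      have hts' : ∀ B ∈ t, ∃ A, A ×ˢ A ⊆ U ∩ swapRel U ∧ B = Aᶜ := fun B hB => hts hB
      choose! Afun hAprop hAeq using hts'
      have hcov : ⋃₀ ((fun B => Bᶜ) '' t) = Set.univ := by
        ext x
        simp only [Set.mem_sUnion, Set.mem_image, Set.mem_univ, iff_true]
        have hx : x ∉ ⋂₀ t := by rw [hne]; exact Set.notMem_empty x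
        rw [Set.mem_sInter] at hx
        push_neg at hx
        obtain ⟨B, hBt, hxB⟩ := hx
        exact ⟨Bᶜ, ⟨B, hBt, rfl⟩, hxB⟩
      obtain ⟨A, hA, hAbad⟩ := hcon ((fun B => Bᶜ) '' t) (htfin.image _) hcov
      obtain ⟨B, hBt, rfl⟩ := hA
      have hc : Bᶜ = Afun B := by conv_lhs => rw [hAeq B hBt, compl_compl]
      exact hAbad (by show Bᶜ ×ˢ Bᶜ ⊆ _; rw [hc]; exact hAprop B hBt)
    haveI := hgen
    set 𝒢 : Ultrafilter X := Ultrafilter.of (Filter.generate ℬ) with h𝒢def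
    have hds := h (𝒢 : Filter X) 𝒢.neBot V hV
    set B : Set X := bigU V (𝒢 : Filter X) with hBdef
    have hBprop : B ×ˢ B ⊆ U ∩ swapRel U := by
      rintro ⟨y, z⟩ ⟨hy, hz⟩
      obtain ⟨hGy, hHy⟩ := ultra_mem V hy
      obtain ⟨hGz, hHz⟩ := ultra_mem V hz
      constructor
      · obtain ⟨x, hx1, hx2⟩ := Filter.nonempty_of_mem (Filter.inter_mem hGy hHz)
        exact hVcomp ⟨x, hx1, hx2⟩
      · obtain ⟨x, hx1, hx2⟩ := Filter.nonempty_of_mem (Filter.inter_mem hGz hHy)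
        exact hVcomp ⟨x, hx1, hx2⟩
    have hBc : Bᶜ ∈ (𝒢 : Filter X) :=
      Ultrafilter.of_le (Filter.generate ℬ)
        (Filter.GenerateSets.basic ⟨B, hBprop, rfl⟩)
    obtain ⟨x, hx1, hx2⟩ := Filter.nonempty_of_mem (Filter.inter_mem hds hBc)
    exact hx2 hx1
end

section
/- Let (X, 𝒰) be a quasi-uniform space possessing an entourage V ∈ 𝒰 such that for each x ∈ X, either V(x) = {x} or V⁻¹(x) = {x}. Then for every doubly stable filter ℱ on (X, 𝒰), the set C(ℱ) of double cluster points of ℱ belongs to ℱ, and consequently the Künzi–Ryser condition holds: for every U ∈ 𝒰 there is F ∈ ℱ with F ⊆ U⁻¹(C(ℱ)) ∩ U(C(ℱ)). -/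
open Filter Set

variable {X Y : Type*}

/-- The 2-envelope of a filter. -/
def envelope (𝒰 : Filter (X × X)) (ℱ : Filter X) : Filter X :=
  Filter.generate {S | ∃ U ∈ 𝒰, ∃ F ∈ ℱ, S = relPre U F ∩ relImg U F}

/-- The filter `ℱ_𝒰` generated by `{U_ℱ : U ∈ 𝒰}`. -/
def filterU (𝒰 : Filter (X × X)) (ℱ : Filter X) : Filter X :=
  Filter.generate {S | ∃ U ∈ 𝒰, S = bigU U ℱ}

/-- `τ(𝒰)`-cluster points of a filter. -/
def fwdCluster (𝒰 : Filter (X × X)) (ℱ : Filter X) : Set X :=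
  {x | ∀ F ∈ ℱ, ∀ U ∈ 𝒰, ∃ y ∈ F, (x, y) ∈ U}

/-- `τ(𝒰⁻¹)`-cluster points of a filter. -/
def bwdCluster (𝒰 : Filter (X × X)) (ℱ : Filter X) : Set X :=
  {x | ∀ F ∈ ℱ, ∀ U ∈ 𝒰, ∃ y ∈ F, (y, x) ∈ U}

/-- The set of double cluster points of a filter. -/
def doubleCluster (𝒰 : Filter (X × X)) (ℱ : Filter X) : Set X :=
  fwdCluster 𝒰 ℱ ∩ bwdCluster 𝒰 ℱ

/-- The basic entourage `U_D = U_+ ∩ U_-` of the stability quasi-uniformity. -/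
def UD (U : Set (X × X)) : Set (Filter X × Filter X) :=
  {p | (⋂ F ∈ p.1.sets, relImg U F) ∈ p.2 ∧ (⋂ G ∈ p.2.sets, relPre U G) ∈ p.1}

theorem stmt2 (𝒰 : Filter (X × X)) (h𝒰 : IsQuasiUniformity 𝒰)
    (V : Set (X × X)) (hV : V ∈ 𝒰)
    (hpt : ∀ x : X, {y | (x, y) ∈ V} = {x} ∨ {y | (y, x) ∈ V} = {x})
    (ℱ : Filter X) (hds : IsDoublyStable 𝒰 ℱ) :
    doubleCluster 𝒰 ℱ ∈ ℱ ∧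
      ∀ U ∈ 𝒰, ∃ F ∈ ℱ,
        F ⊆ relPre U (doubleCluster 𝒰 ℱ) ∩ relImg U (doubleCluster 𝒰 ℱ) := by
  have hmem : ∀ x ∈ bigU V ℱ, ∀ F ∈ ℱ, x ∈ F := by
    intro x hx F hF
    have hx' : x ∈ relPre V F ∩ relImg V F := by
      have := Set.mem_iInter.mp hx F
      exact Set.mem_iInter.mp this hF
    obtain ⟨⟨z, hzF, hzx⟩, ⟨y, hyF, hxy⟩⟩ := hx'
    rcases hpt x with h | h
    · have : z ∈ ({x} : Set X) := h ▸ hzx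
      rw [Set.mem_singleton_iff] at this
      exact this ▸ hzF
    · have : y ∈ ({x} : Set X) := h ▸ hxy
      rw [Set.mem_singleton_iff] at this
      exact this ▸ hyF
  have hsub : bigU V ℱ ⊆ doubleCluster 𝒰 ℱ := by
    intro x hx
    constructor
    · intro F hF U hU
      exact ⟨x, hmem x hx F hF, h𝒰.refl U hU rfl⟩
    · intro F hF U hU
      exact ⟨x, hmem x hx F hF, h𝒰.refl U hU rfl⟩
  have hC : doubleCluster 𝒰 ℱ ∈ ℱ := Filter.mem_of_superset (hds V hV) hsub
  refine ⟨hC, fun U hU => ⟨doubleCluster 𝒰 ℱ, hC, fun x hx => ?_⟩⟩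
  exact ⟨⟨x, hx, h𝒰.refl U hU rfl⟩, ⟨x, hx, h𝒰.refl U hU rfl⟩⟩
end

section
/- Let X = ℕ (positive integers) and 𝒰 the quasi-uniformity generated by the subbase consisting of the usual order relation ≤ and all relations ({x} × X) ∪ (X × (X ∖ {x})) for x ∈ X. Then every stable filter on (X, 𝒰) has nonempty intersection (hence a τ(𝒰^s)-cluster point); in particular every doubly stable filter on (X, 𝒰) has a double cluster point. -/
open Filter Set

variable {X Y : Type*}

/-- The order entourage on the positive integers. -/
def leRel : Set (ℕ+ × ℕ+) := {p | p.1 ≤ p.2}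

/-- The transitive entourage `({x} × X) ∪ (X × (X ∖ {x}))`. -/
def txRel (x : ℕ+) : Set (ℕ+ × ℕ+) :=
  ({x} ×ˢ (Set.univ : Set ℕ+)) ∪ ((Set.univ : Set ℕ+) ×ˢ ({x}ᶜ : Set ℕ+))

/-- The quasi-uniformity generated by the subbase consisting of `≤` and
the relations `txRel x`. -/
def natQU : Filter (ℕ+ × ℕ+) := Filter.generate (insert leRel (Set.range txRel))

lemma natQU_refl : ∀ U ∈ natQU, SetRel.id ⊆ U := by
  have h : 𝓟 (SetRel.id : Set (ℕ+ × ℕ+)) ≤ natQU := by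
    rw [natQU, Filter.le_generate_iff]
    rintro S (rfl | ⟨x, rfl⟩)
    · rintro ⟨a, b⟩ hab
      simp only [SetRel.mem_id] at hab
      exact le_of_eq hab
    · rintro ⟨a, b⟩ hab
      simp only [SetRel.mem_id] at hab
      subst hab
      rcases eq_or_ne a x with rfl | hne
      · exact Or.inl ⟨rfl, trivial⟩
      · exact Or.inr ⟨trivial, hne⟩
  exact fun U hU => h hU

lemma key (ℱ : Filter ℕ+) (hne : ℱ.NeBot) (hs : IsStable natQU ℱ) :
    (⋂₀ ℱ.sets).Nonempty := by
  have hle : leRel ∈ natQU := Filter.mem_generate_of_mem (mem_insert _ _)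
  have htx : ∀ x, txRel x ∈ natQU := fun x =>
    Filter.mem_generate_of_mem (mem_insert_of_mem _ ⟨x, rfl⟩)
  set S := ⋂ F ∈ ℱ.sets, relImg leRel F with hS
  have hSmem : S ∈ ℱ := hs leRel hle
  have hSne : S.Nonempty := Filter.nonempty_of_mem hSmem
  obtain ⟨m, hmS, hmin⟩ := wellFounded_lt.has_min S hSne
  refine ⟨m, ?_⟩
  intro F hF
  by_contra hmF
  -- {m}ᶜ ∈ ℱ
  have hT : (⋂ G ∈ ℱ.sets, relImg (txRel m) G) ∈ ℱ := hs (txRel m) (htx m)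
  have hsub : (⋂ G ∈ ℱ.sets, relImg (txRel m) G) ⊆ ({m}ᶜ : Set ℕ+) := by
    intro y hy
    have hy' : y ∈ relImg (txRel m) F := by
      exact mem_iInter₂.1 hy F hF
    obtain ⟨z, hzF, hz⟩ := hy'
    rcases hz with ⟨hz1, _⟩ | ⟨_, hz2⟩
    · exact absurd (hz1 ▸ hzF : m ∈ F) hmF
    · exact hz2
  have hmc : ({m}ᶜ : Set ℕ+) ∈ ℱ := Filter.mem_of_superset hT hsub
  have hF' : S ∩ ({m}ᶜ : Set ℕ+) ∈ ℱ := Filter.inter_mem hSmem hmc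
  have hmIn : m ∈ relImg leRel (S ∩ ({m}ᶜ : Set ℕ+)) := by
    have := mem_iInter₂.1 hmS (S ∩ ({m}ᶜ : Set ℕ+)) hF'
    exact this
  obtain ⟨x, ⟨hxS, hxm⟩, hxle⟩ := hmIn
  exact hmin x hxS (lt_of_le_of_ne hxle hxm)

theorem stmt3 :
    (∀ ℱ : Filter ℕ+, ℱ.NeBot → IsStable natQU ℱ → (⋂₀ ℱ.sets).Nonempty) ∧
    (∀ ℱ : Filter ℕ+, ℱ.NeBot → IsDoublyStable natQU ℱ →
      (doubleCluster natQU ℱ).Nonempty) := by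
  constructor
  · exact fun ℱ h hs => key ℱ h hs
  · intro ℱ hne hds
    have hs : IsStable natQU ℱ := by
      intro U hU
      refine Filter.mem_of_superset (hds U hU) ?_
      intro y hy
      refine mem_iInter₂.2 fun F hF => ?_
      exact (mem_iInter₂.1 hy F hF).2
    obtain ⟨m, hm⟩ := key ℱ hne hs
    refine ⟨m, ?_, ?_⟩
    · intro F hF U hU
      exact ⟨m, hm F hF, natQU_refl U hU rfl⟩
    · intro F hF U hU
      exact ⟨m, hm F hF, natQU_refl U hU rfl⟩
end

section
/- Let X = ℕ and 𝒰 the quasi-uniformity generated by the subbase consisting of ≤ and the relations ({x} × X) ∪ (X × (X ∖ {x})) for x ∈ X. Let 𝒢 be the filter on X generated by the base {{1} ∪ G' : G' cofinite in X}. Then 𝒢 is a doubly stable filter on (X, 𝒰) whose set of double cluster points is {1}, yet with U = ≤ no member G of 𝒢 satisfies G ⊆ U⁻¹({1}); hence the Künzi–Ryser condition fails for (X, 𝒰). -/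
open Filter Set

variable {X Y : Type*}

/-- The filter generated by the base `{{1} ∪ G' : G' cofinite}`. -/
def 𝒢nat : Filter ℕ+ :=
  Filter.generate {A : Set ℕ+ | ∃ G' : Set ℕ+, G'ᶜ.Finite ∧ A = {1} ∪ G'}


/-! ### Auxiliary lemmas -/

lemma mem_leRel {p : ℕ+ × ℕ+} : p ∈ leRel ↔ p.1 ≤ p.2 := Iff.rfl

lemma mem_txRel {x : ℕ+} {p : ℕ+ × ℕ+} : p ∈ txRel x ↔ p.1 = x ∨ p.2 ≠ x := by
  simp only [txRel, Set.mem_union, Set.mem_prod, Set.mem_singleton_iff, Set.mem_univ,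
    and_true, true_and, Set.mem_compl_iff]

lemma txRel_injective : Function.Injective txRel := by
  intro x y h
  by_contra hxy
  have h1 : ((y, x) : ℕ+ × ℕ+) ∈ txRel y := mem_txRel.2 (Or.inl rfl)
  rw [← h] at h1
  rcases mem_txRel.1 h1 with h2 | h2
  · exact hxy (h2.symm)
  · exact h2 rfl

lemma mem_Gnat_iff {A : Set ℕ+} : A ∈ 𝒢nat ↔ 1 ∈ A ∧ Aᶜ.Finite := by
  constructor
  · intro hA
    obtain ⟨t, hts, htf, hsub⟩ := Filter.mem_generate_iff.1 hA
    have h1 : (1 : ℕ+) ∈ ⋂₀ t := by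
      intro s hs
      obtain ⟨G', -, rfl⟩ := hts hs
      exact Or.inl rfl
    have h2 : (⋂₀ t)ᶜ.Finite := by
      rw [Set.compl_sInter]
      apply Set.Finite.sUnion (htf.image _)
      rintro s ⟨u, hu, rfl⟩
      obtain ⟨G', hG', rfl⟩ := hts hu
      refine hG'.subset ?_
      intro a ha
      simp only [Set.mem_compl_iff, Set.mem_union] at ha
      exact fun hG => ha (Or.inr hG)
    exact ⟨hsub h1, h2.subset (Set.compl_subset_compl.2 hsub)⟩
  · rintro ⟨h1, h2⟩
    apply Filter.mem_generate_of_mem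
    exact ⟨A, h2, by rw [Set.union_eq_self_of_subset_left (Set.singleton_subset_iff.2 h1)]⟩

lemma leRel_mem_natQU : leRel ∈ natQU :=
  Filter.mem_generate_of_mem (Set.mem_insert _ _)

lemma txRel_mem_natQU (x : ℕ+) : txRel x ∈ natQU :=
  Filter.mem_generate_of_mem (Set.mem_insert_of_mem _ ⟨x, rfl⟩)

lemma natQU_basis {U : Set (ℕ+ × ℕ+)} (hU : U ∈ natQU) :
    ∃ T : Set ℕ+, T.Finite ∧ (leRel ∩ ⋂ x ∈ T, txRel x) ⊆ U := by
  obtain ⟨t, hts, htf, hsub⟩ := Filter.mem_generate_iff.1 hU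
  refine ⟨txRel ⁻¹' t, htf.preimage (txRel_injective.injOn), ?_⟩
  refine Set.Subset.trans ?_ hsub
  rintro p ⟨hle, htx⟩ s hs
  rcases hts hs with rfl | ⟨x, rfl⟩
  · exact hle
  · exact Set.mem_iInter₂.1 htx x hs

lemma diag_mem_natQU {U : Set (ℕ+ × ℕ+)} (hU : U ∈ natQU) (a : ℕ+) : (a, a) ∈ U := by
  have h : (pure ((a, a) : ℕ+ × ℕ+)) ≤ natQU := by
    refine Filter.le_generate_iff.2 ?_
    rintro s (rfl | ⟨x, rfl⟩)
    · exact le_refl a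
    · rcases eq_or_ne a x with h | h
      · exact mem_txRel.2 (Or.inl h)
      · exact mem_txRel.2 (Or.inr h)
  exact h hU

lemma bigU_mono {V U : Set (ℕ+ × ℕ+)} (h : V ⊆ U) (ℱ : Filter ℕ+) :
    bigU V ℱ ⊆ bigU U ℱ := by
  intro y hy
  refine Set.mem_iInter₂.2 fun F hF => ?_
  obtain ⟨h1, h2⟩ := Set.mem_iInter₂.1 hy F hF
  exact ⟨by obtain ⟨a, ha, hp⟩ := h1; exact ⟨a, ha, h hp⟩,
         by obtain ⟨a, ha, hp⟩ := h2; exact ⟨a, ha, h hp⟩⟩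

lemma key_subset (T : Set ℕ+) (hT : T.Finite) :
    ({1} ∪ Tᶜ : Set ℕ+) ⊆ bigU (leRel ∩ ⋂ x ∈ T, txRel x) 𝒢nat := by
  intro y hy
  refine Set.mem_iInter₂.2 fun F hF => ?_
  obtain ⟨h1F, hFc⟩ := mem_Gnat_iff.1 hF
  have hone : ∀ z : ℕ+, ((1 : ℕ+), z) ∈ ⋂ x ∈ T, txRel x → True := fun _ _ => trivial
  rcases hy with hy1 | hyT
  · -- y = 1
    rw [Set.mem_singleton_iff] at hy1
    subst hy1
    have hdiag : ((1 : ℕ+), (1 : ℕ+)) ∈ leRel ∩ ⋂ x ∈ T, txRel x := by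
      refine ⟨mem_leRel.2 (le_refl _), Set.mem_iInter₂.2 fun x _ => ?_⟩
      rcases eq_or_ne (1 : ℕ+) x with h | h
      · exact mem_txRel.2 (Or.inl h)
      · exact mem_txRel.2 (Or.inr h)
    exact ⟨⟨1, h1F, hdiag⟩, ⟨1, h1F, hdiag⟩⟩
  · -- y ∉ T
    constructor
    · -- relPre: need a ∈ F with (y, a) ∈ V
      have hfin : (Fᶜ ∪ (Set.Iio y ∪ T)).Finite :=
        hFc.union ((Set.finite_Iio y).union hT)
      obtain ⟨a, ha⟩ := hfin.infinite_compl.nonempty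
      simp only [Set.mem_compl_iff, Set.mem_union, not_or] at ha
      obtain ⟨haF, haIio, haT⟩ := ha
      refine ⟨a, not_not.1 haF, mem_leRel.2 (le_of_not_gt haIio),
        Set.mem_iInter₂.2 fun x hx => ?_⟩
      exact mem_txRel.2 (Or.inr (fun h => haT ((show a = x from h).symm ▸ hx)))
    · -- relImg: witness a = 1
      refine ⟨1, h1F, mem_leRel.2 y.one_le, Set.mem_iInter₂.2 fun x hx => ?_⟩
      exact mem_txRel.2 (Or.inr (fun h => hyT ((show y = x from h).symm ▸ hx)))

lemma Gnat_doublyStable : IsDoublyStable natQU 𝒢nat := by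
  intro U hU
  obtain ⟨T, hTf, hTsub⟩ := natQU_basis hU
  have h1 : ({1} ∪ Tᶜ : Set ℕ+) ∈ 𝒢nat := by
    refine mem_Gnat_iff.2 ⟨Or.inl rfl, ?_⟩
    refine hTf.subset ?_
    intro a ha
    simp only [Set.mem_compl_iff, Set.mem_union, not_or, not_not] at ha
    exact ha.2
  exact Filter.mem_of_superset h1 ((key_subset T hTf).trans (bigU_mono hTsub 𝒢nat))

lemma Gnat_doubleCluster : doubleCluster natQU 𝒢nat = ({1} : Set ℕ+) := by
  ext z
  constructor
  · rintro ⟨-, hbwd⟩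
    have hF : ({1} ∪ {a : ℕ+ | z < a} : Set ℕ+) ∈ 𝒢nat := by
      refine mem_Gnat_iff.2 ⟨Or.inl rfl, (Set.finite_Iic z).subset ?_⟩
      intro a ha
      simp only [Set.mem_compl_iff, Set.mem_union, Set.mem_singleton_iff,
        Set.mem_setOf_eq, not_or, not_lt] at ha
      exact ha.2
    have hU : leRel ∩ txRel z ∈ natQU :=
      Filter.inter_mem leRel_mem_natQU (txRel_mem_natQU z)
    obtain ⟨y, hyF, hyle, hytx⟩ := hbwd _ hF _ hU
    have hyz : y = z := by
      rcases mem_txRel.1 hytx with h | h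
      · exact h
      · exact absurd rfl h
    subst hyz
    rcases hyF with hy1 | hy2
    · exact hy1
    · exact absurd (show y < y from hy2) (lt_irrefl y)
  · rintro rfl
    constructor
    · intro F hF U hU
      exact ⟨1, (mem_Gnat_iff.1 hF).1, diag_mem_natQU hU 1⟩
    · intro F hF U hU
      exact ⟨1, (mem_Gnat_iff.1 hF).1, diag_mem_natQU hU 1⟩

lemma Gnat_no_pre : ∀ G ∈ 𝒢nat, ¬ G ⊆ relPre leRel ({1} : Set ℕ+) := by
  intro G hG hsub
  obtain ⟨h1, h2⟩ := mem_Gnat_iff.1 hG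
  have hGi : G.Infinite := by
    have := h2.infinite_compl
    rwa [compl_compl] at this
  obtain ⟨a, haG, ha1⟩ := (hGi.diff (Set.finite_singleton 1)).nonempty
  obtain ⟨x, hx, hax⟩ := hsub haG
  rw [Set.mem_singleton_iff] at hx
  subst hx
  exact ha1 (le_antisymm hax a.one_le)

theorem stmt4 :
    IsDoublyStable natQU 𝒢nat ∧
    doubleCluster natQU 𝒢nat = ({1} : Set ℕ+) ∧
    (∀ G ∈ 𝒢nat, ¬ G ⊆ relPre leRel ({1} : Set ℕ+)) ∧
    ¬ (∀ ℱ : Filter ℕ+, ℱ.NeBot → IsDoublyStable natQU ℱ → ∀ U ∈ natQU,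
        ∃ F ∈ ℱ, F ⊆ relPre U (doubleCluster natQU ℱ) ∩
          relImg U (doubleCluster natQU ℱ)) := by
  refine ⟨Gnat_doublyStable, Gnat_doubleCluster, Gnat_no_pre, ?_⟩
  intro h
  have hnb : 𝒢nat.NeBot := by
    refine Filter.neBot_of_le (f := pure 1) (Filter.le_generate_iff.2 ?_)
    rintro s ⟨G', -, rfl⟩
    exact Or.inl rfl
  obtain ⟨F, hF, hsub⟩ := h 𝒢nat hnb Gnat_doublyStable leRel leRel_mem_natQU
  rw [Gnat_doubleCluster] at hsub
  exact Gnat_no_pre F hF (hsub.trans Set.inter_subset_left)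
end

section
/- For every filter ℱ on a quasi-uniform space (X, 𝒰), the 2-envelope 𝒟_𝒰(ℱ) is 2-round, i.e., 𝒟_𝒰(𝒟_𝒰(ℱ)) = 𝒟_𝒰(ℱ). -/
open Filter Set

variable {X Y : Type*}

lemma le_envelope (𝒰 : Filter (X × X)) (h𝒰 : IsQuasiUniformity 𝒰) (ℱ : Filter X) :
    ℱ ≤ envelope 𝒰 ℱ := by
  rw [envelope, Filter.le_generate_iff]
  rintro S ⟨U, hU, F, hF, rfl⟩
  refine Filter.mem_of_superset hF fun x hx => ⟨⟨x, hx, h𝒰.refl U hU rfl⟩, ⟨x, hx, h𝒰.refl U hU rfl⟩⟩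

theorem stmt6 (𝒰 : Filter (X × X)) (h𝒰 : IsQuasiUniformity 𝒰) (ℱ : Filter X) :
    envelope 𝒰 (envelope 𝒰 ℱ) = envelope 𝒰 ℱ := by
  apply le_antisymm
  · -- envelope (envelope ℱ) ≤ envelope ℱ : each generator of envelope ℱ is in the double envelope
    conv_rhs => rw [envelope]
    rw [Filter.le_generate_iff]
    rintro S ⟨U, hU, F, hF, rfl⟩
    obtain ⟨V, hV, hVV⟩ := h𝒰.comp U hU
    have hG : relPre V F ∩ relImg V F ∈ envelope 𝒰 ℱ :=
      Filter.mem_generate_of_mem ⟨V, hV, F, hF, rfl⟩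
    have hgen : relPre V (relPre V F ∩ relImg V F) ∩ relImg V (relPre V F ∩ relImg V F)
        ∈ envelope 𝒰 (envelope 𝒰 ℱ) :=
      Filter.mem_generate_of_mem ⟨V, hV, _, hG, rfl⟩
    refine Filter.mem_of_superset hgen ?_
    rintro y ⟨⟨x, hx, hyx⟩, ⟨x', hx', hx'y⟩⟩
    constructor
    · obtain ⟨z, hz, hxz⟩ := hx.1
      exact ⟨z, hz, hVV ⟨x, hyx, hxz⟩⟩
    · obtain ⟨z, hz, hzx'⟩ := hx'.2
      exact ⟨z, hz, hVV ⟨x', hzx', hx'y⟩⟩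
  · exact le_envelope 𝒰 h𝒰 (envelope 𝒰 ℱ)
end

section
/- If ℱ is a doubly stable filter on a quasi-uniform space (X, 𝒰), then its 2-envelope 𝒟_𝒰(ℱ) is also doubly stable. -/
open Filter Set

variable {X Y : Type*}

lemma relPre_mono {U U' : Set (X × X)} {A A' : Set X} (hU : U ⊆ U') (hA : A ⊆ A') :
    relPre U A ⊆ relPre U' A' := fun _ ⟨x, hx, hxy⟩ => ⟨x, hA hx, hU hxy⟩

lemma relImg_mono {U U' : Set (X × X)} {A A' : Set X} (hU : U ⊆ U') (hA : A ⊆ A') :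
    relImg U A ⊆ relImg U' A' := fun _ ⟨x, hx, hxy⟩ => ⟨x, hA hx, hU hxy⟩

lemma mem_envelope_iff {𝒰 : Filter (X × X)} {ℱ : Filter X} {G : Set X} :
    G ∈ envelope 𝒰 ℱ ↔ ∃ W ∈ 𝒰, ∃ F ∈ ℱ, relPre W F ∩ relImg W F ⊆ G := by
  constructor
  · intro hG
    rw [envelope, Filter.mem_generate_iff] at hG
    obtain ⟨t, hts, htfin, hsub⟩ := hG
    -- show by induction that some generator is contained in ⋂₀ t
    have : ∃ W ∈ 𝒰, ∃ F ∈ ℱ, relPre W F ∩ relImg W F ⊆ ⋂₀ t := by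
      clear hsub
      revert hts
      refine Set.Finite.induction_on (motive := fun t _ => t ⊆ _ → ∃ W ∈ 𝒰, ∃ F ∈ ℱ,
          relPre W F ∩ relImg W F ⊆ ⋂₀ t) _ htfin
        (fun _ => ⟨univ, univ_mem, univ, univ_mem, by simp⟩) ?_
      intro s t' hnot hfin ih hts
      · have hs : s ∈ {S | ∃ U ∈ 𝒰, ∃ F ∈ ℱ, S = relPre U F ∩ relImg U F} :=
          hts (mem_insert _ _)
        obtain ⟨U, hU, F, hF, rfl⟩ := hs
        obtain ⟨W, hW, F', hF', hsub'⟩ := ih fun x hx => hts (mem_insert_of_mem _ hx)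
        refine ⟨W ∩ U, inter_mem hW hU, F' ∩ F, inter_mem hF' hF, ?_⟩
        rw [sInter_insert]
        intro x hx
        exact ⟨⟨relPre_mono inter_subset_right inter_subset_right hx.1,
          relImg_mono inter_subset_right inter_subset_right hx.2⟩,
          hsub' ⟨relPre_mono inter_subset_left inter_subset_left hx.1,
            relImg_mono inter_subset_left inter_subset_left hx.2⟩⟩
    obtain ⟨W, hW, F, hF, h⟩ := this
    exact ⟨W, hW, F, hF, h.trans hsub⟩
  · rintro ⟨W, hW, F, hF, hsub⟩
    exact Filter.mem_of_superset
      (Filter.mem_generate_of_mem (s := {S | ∃ U ∈ 𝒰, ∃ F ∈ ℱ, S = relPre U F ∩ relImg U F})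
        ⟨W, hW, F, hF, rfl⟩) hsub

lemma mem_bigU {U : Set (X × X)} {ℱ : Filter X} {x : X} :
    x ∈ bigU U ℱ ↔ ∀ F ∈ ℱ, x ∈ relPre U F ∧ x ∈ relImg U F := by
  simp [bigU, mem_iInter]

theorem stmt8 (𝒰 : Filter (X × X)) (h𝒰 : IsQuasiUniformity 𝒰) (ℱ : Filter X)
    (hds : IsDoublyStable 𝒰 ℱ) : IsDoublyStable 𝒰 (envelope 𝒰 ℱ) := by
  intro U hU
  obtain ⟨V, hV, hVV⟩ := h𝒰.comp U hU
  have hF₀ : bigU V ℱ ∈ ℱ := hds V hV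
  have hgen : relPre V (bigU V ℱ) ∩ relImg V (bigU V ℱ) ∈ envelope 𝒰 ℱ :=
    mem_envelope_iff.mpr ⟨V, hV, bigU V ℱ, hF₀, subset_rfl⟩
  refine Filter.mem_of_superset hgen ?_
  intro x hx
  rw [mem_bigU]
  intro G hG
  obtain ⟨W, hW, F, hF, hsub⟩ := mem_envelope_iff.mp hG
  set W' := W ∩ V with hW'def
  have hW' : W' ∈ 𝒰 := inter_mem hW hV
  have hFW' : bigU W' ℱ ∈ ℱ := hds W' hW'
  have key : ∀ y, y ∈ bigU W' ℱ → y ∈ G := by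
    intro y hy
    obtain ⟨h1, h2⟩ := mem_bigU.mp hy F hF
    exact hsub ⟨relPre_mono inter_subset_left subset_rfl h1,
      relImg_mono inter_subset_left subset_rfl h2⟩
  constructor
  · -- x ∈ relPre U G
    obtain ⟨a, ha, hxa⟩ := hx.1
    obtain ⟨hap, _⟩ := mem_bigU.mp ha (bigU W' ℱ) hFW'
    obtain ⟨y, hy, hay⟩ := hap
    exact ⟨y, key y hy, hVV (SetRel.mem_comp.mpr ⟨a, hxa, hay⟩)⟩
  · -- x ∈ relImg U G
    obtain ⟨b, hb, hbx⟩ := hx.2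
    obtain ⟨_, hbi⟩ := mem_bigU.mp hb (bigU W' ℱ) hFW'
    obtain ⟨z, hz, hzb⟩ := hbi
    exact ⟨z, key z hz, hVV (SetRel.mem_comp.mpr ⟨b, hzb, hbx⟩)⟩
end

section
/- If ℱ is a doubly stable filter on a quasi-uniform space (X, 𝒰), then the filter ℱ_𝒰 generated by {U_ℱ : U ∈ 𝒰} coincides with the 2-envelope 𝒟_𝒰(ℱ). -/
open Filter Set

variable {X Y : Type*}

theorem stmt9 (𝒰 : Filter (X × X)) (h𝒰 : IsQuasiUniformity 𝒰) (ℱ : Filter X)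
    (hds : IsDoublyStable 𝒰 ℱ) : filterU 𝒰 ℱ = envelope 𝒰 ℱ := by
  apply le_antisymm
  · -- filterU ≤ envelope : each envelope generator is in filterU
    rw [envelope, Filter.le_generate_iff]
    rintro S ⟨U, hU, F, hF, rfl⟩
    have h1 : bigU U ℱ ∈ filterU 𝒰 ℱ :=
      Filter.mem_generate_of_mem ⟨U, hU, rfl⟩
    refine Filter.mem_of_superset h1 ?_
    intro y hy
    simp only [bigU, mem_iInter] at hy
    exact hy F hF
  · -- envelope ≤ filterU : each filterU generator is in envelope
    rw [filterU, Filter.le_generate_iff]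
    rintro S ⟨U, hU, rfl⟩
    obtain ⟨V, hV, hVV⟩ := h𝒰.comp U hU
    have hF' : bigU V ℱ ∈ ℱ := hds V hV
    have hgen : relPre V (bigU V ℱ) ∩ relImg V (bigU V ℱ) ∈ envelope 𝒰 ℱ :=
      Filter.mem_generate_of_mem ⟨V, hV, bigU V ℱ, hF', rfl⟩
    refine Filter.mem_of_superset hgen ?_
    rintro y ⟨⟨x₁, hx₁, hyx₁⟩, x₂, hx₂, hx₂y⟩
    simp only [bigU, mem_iInter] at hx₁ hx₂ ⊢
    intro F hF
    obtain ⟨⟨z₁, hz₁, hz₁'⟩, _⟩ := hx₁ F hF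
    obtain ⟨_, z₂, hz₂, hz₂'⟩ := hx₂ F hF
    exact ⟨⟨z₁, hz₁, hVV ⟨x₁, hyx₁, hz₁'⟩⟩, ⟨z₂, hz₂, hVV ⟨x₂, hz₂', hx₂y⟩⟩⟩
end

section
/- Let S_D(X) be the set of doubly stable filters on a quasi-uniform space (X, 𝒰). For U ∈ 𝒰 define U_+ = {(ℱ,𝒢) : ⋂_{F∈ℱ}U(F) ∈ 𝒢} and U_- = {(ℱ,𝒢) : ⋂_{G∈𝒢}U⁻¹(G) ∈ ℱ}, and U_D = U_+ ∩ U_-. Then {U_D : U ∈ 𝒰} is a base for a quasi-uniformity on S_D(X); in particular each U_D contains the diagonal, and if V² ⊆ U then V_D ∘ V_D ⊆ U_D. -/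
open Filter Set

variable {X Y : Type*}

theorem stmt11 (𝒰 : Filter (X × X)) (h𝒰 : IsQuasiUniformity 𝒰) :
    (∀ U ∈ 𝒰, ∀ ℱ : Filter X, IsDoublyStable 𝒰 ℱ → (ℱ, ℱ) ∈ UD U) ∧
    (∀ U V : Set (X × X), SetRel.comp V V ⊆ U →
      ∀ ℱ 𝒢 ℋ : Filter X, IsDoublyStable 𝒰 ℱ → IsDoublyStable 𝒰 𝒢 →
        IsDoublyStable 𝒰 ℋ → (ℱ, 𝒢) ∈ UD V → (𝒢, ℋ) ∈ UD V → (ℱ, ℋ) ∈ UD U) ∧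
    (∀ U V : Set (X × X), U ⊆ V → (UD U : Set (Filter X × Filter X)) ⊆ UD V) := by
  refine ⟨?_, ?_, ?_⟩
  · intro U hU ℱ hℱ
    have hb := hℱ U hU
    constructor
    · exact Filter.mem_of_superset hb (by
        intro x hx
        simp only [bigU, Set.mem_iInter] at hx ⊢
        intro F hF
        exact (hx F hF).2)
    · exact Filter.mem_of_superset hb (by
        intro x hx
        simp only [bigU, Set.mem_iInter] at hx ⊢
        intro F hF
        exact (hx F hF).1)
  · intro U V hVV ℱ 𝒢 ℋ _ _ _ hFG hGH
    obtain ⟨hA, hB⟩ := hFG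
    obtain ⟨hC, hD⟩ := hGH
    constructor
    · refine Filter.mem_of_superset hC ?_
      intro z hz
      simp only [Set.mem_iInter] at hz ⊢
      intro F hF
      have hVF : relImg V F ∈ 𝒢 := Filter.mem_of_superset hA (by
        intro y hy
        simp only [Set.mem_iInter] at hy
        exact hy F hF)
      obtain ⟨y, hyVF, hyz⟩ := hz (relImg V F) hVF
      obtain ⟨x, hxF, hxy⟩ := hyVF
      exact ⟨x, hxF, hVV ⟨y, hxy, hyz⟩⟩
    · refine Filter.mem_of_superset hB ?_
      intro x hx
      simp only [Set.mem_iInter] at hx ⊢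
      intro H hH
      have hVH : relPre V H ∈ 𝒢 := Filter.mem_of_superset hD (by
        intro y hy
        simp only [Set.mem_iInter] at hy
        exact hy H hH)
      obtain ⟨y, hyVH, hxy⟩ := hx (relPre V H) hVH
      obtain ⟨z, hzH, hyz⟩ := hyVH
      exact ⟨z, hzH, hVV ⟨y, hxy, hyz⟩⟩
  · intro U V hUV p ⟨h1, h2⟩
    constructor
    · refine Filter.mem_of_superset h1 ?_
      intro x hx
      simp only [Set.mem_iInter] at hx ⊢
      intro F hF
      obtain ⟨y, hy, hyx⟩ := hx F hF
      exact ⟨y, hy, hUV hyx⟩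
    · refine Filter.mem_of_superset h2 ?_
      intro x hx
      simp only [Set.mem_iInter] at hx ⊢
      intro F hF
      obtain ⟨y, hy, hyx⟩ := hx F hF
      exact ⟨y, hy, hUV hyx⟩
end

section
/- Let (X, 𝒰) and (Y, 𝒱) be quasi-uniform spaces and f : X → Y quasi-uniformly continuous. If ℱ is a doubly stable filter on (X, 𝒰), then the filter [f(ℱ)] on Y generated by {f(F) : F ∈ ℱ} is doubly stable on (Y, 𝒱). Moreover the induced map f_D : S_D(X) → S_D(Y), ℱ ↦ [f(ℱ)], is quasi-uniformly continuous with respect to the stability quasi-uniformities 𝒰_D and 𝒱_D. -/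
open Filter Set

variable {X Y : Type*}

/-- Quasi-uniform continuity. -/
def QUContinuous (𝒰 : Filter (X × X)) (𝒱 : Filter (Y × Y)) (f : X → Y) : Prop :=
  ∀ V ∈ 𝒱, ∃ U ∈ 𝒰, ∀ p ∈ U, (f p.1, f p.2) ∈ V

theorem stmt12 (𝒰 : Filter (X × X)) (𝒱 : Filter (Y × Y))
    (h𝒰 : IsQuasiUniformity 𝒰) (h𝒱 : IsQuasiUniformity 𝒱)
    (f : X → Y) (hf : QUContinuous 𝒰 𝒱 f) :
    (∀ ℱ : Filter X, IsDoublyStable 𝒰 ℱ → IsDoublyStable 𝒱 (Filter.map f ℱ)) ∧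
    (∀ V ∈ 𝒱, ∃ U ∈ 𝒰, ∀ ℱ 𝒢 : Filter X, IsDoublyStable 𝒰 ℱ →
      IsDoublyStable 𝒰 𝒢 → (ℱ, 𝒢) ∈ UD U →
        (Filter.map f ℱ, Filter.map f 𝒢) ∈ UD V) := by
  constructor
  · intro ℱ hℱ V hV
    obtain ⟨U, hU, hUV⟩ := hf V hV
    refine Filter.mem_of_superset (Filter.image_mem_map (hℱ U hU)) ?_
    rintro _ ⟨x, hx, rfl⟩
    simp only [bigU, mem_iInter, mem_inter_iff] at hx ⊢
    intro G hG
    obtain ⟨hpre, himg⟩ := hx (f ⁻¹' G) hG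
    constructor
    · obtain ⟨z, hz, hxz⟩ := hpre
      exact ⟨f z, hz, hUV _ hxz⟩
    · obtain ⟨z, hz, hxz⟩ := himg
      exact ⟨f z, hz, hUV _ hxz⟩
  · intro V hV
    obtain ⟨U, hU, hUV⟩ := hf V hV
    refine ⟨U, hU, fun ℱ 𝒢 _ _ ⟨hA, hB⟩ => ⟨?_, ?_⟩⟩
    · refine Filter.mem_of_superset (Filter.image_mem_map hA) ?_
      rintro _ ⟨a, ha, rfl⟩
      simp only [mem_iInter] at ha ⊢
      intro F' hF'
      obtain ⟨x, hx, hxa⟩ := ha (f ⁻¹' F') hF'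
      exact ⟨f x, hx, hUV _ hxa⟩
    · refine Filter.mem_of_superset (Filter.image_mem_map hB) ?_
      rintro _ ⟨b, hb, rfl⟩
      simp only [mem_iInter] at hb ⊢
      intro G' hG'
      obtain ⟨x, hx, hbx⟩ := hb (f ⁻¹' G') hG'
      exact ⟨f x, hx, hUV _ hbx⟩
end

section
/- Two doubly stable filters ℱ and 𝒢 on a quasi-uniform space (X, 𝒰) are 𝒰_D-equivalent (i.e., (ℱ, 𝒢) ∈ U_D and (𝒢, ℱ) ∈ U_D for all U ∈ 𝒰) if and only if ℱ_𝒰 = 𝒢_𝒰. -/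
open Filter Set

variable {X Y : Type*}

lemma bigU_eq (U : Set (X × X)) (ℱ : Filter X) :
    bigU U ℱ = (⋂ F ∈ ℱ.sets, relPre U F) ∩ (⋂ F ∈ ℱ.sets, relImg U F) := by
  ext x
  simp only [bigU, mem_iInter, mem_inter_iff]
  exact ⟨fun h => ⟨fun i hi => (h i hi).1, fun i hi => (h i hi).2⟩,
         fun h i hi => ⟨h.1 i hi, h.2 i hi⟩⟩

lemma key_subset_s15 (U V : Set (X × X)) (hVU : SetRel.comp V V ⊆ U)
    (ℱ 𝒢 : Filter X) (hmem : bigU V 𝒢 ∈ ℱ) : bigU V ℱ ⊆ bigU U 𝒢 := by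
  intro x hx
  simp only [bigU, mem_iInter, mem_inter_iff] at hx ⊢
  intro G hG
  obtain ⟨hpre, himg⟩ := hx (bigU V 𝒢) hmem
  constructor
  · obtain ⟨f, hf, hxf⟩ := hpre
    simp only [bigU, mem_iInter, mem_inter_iff] at hf
    obtain ⟨⟨g, hg, hfg⟩, -⟩ := hf G hG
    exact ⟨g, hg, hVU ⟨f, hxf, hfg⟩⟩
  · obtain ⟨f, hf, hfx⟩ := himg
    simp only [bigU, mem_iInter, mem_inter_iff] at hf
    obtain ⟨-, ⟨g, hg, hgf⟩⟩ := hf G hG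
    exact ⟨g, hg, hVU ⟨f, hgf, hfx⟩⟩

theorem stmt15 (𝒰 : Filter (X × X)) (h𝒰 : IsQuasiUniformity 𝒰)
    (ℱ 𝒢 : Filter X) (hℱ : IsDoublyStable 𝒰 ℱ) (h𝒢 : IsDoublyStable 𝒰 𝒢) :
    (∀ U ∈ 𝒰, (ℱ, 𝒢) ∈ UD U ∧ (𝒢, ℱ) ∈ UD U) ↔ filterU 𝒰 ℱ = filterU 𝒰 𝒢 := by
  have hUDequiv : ∀ U, ((ℱ, 𝒢) ∈ UD U ∧ (𝒢, ℱ) ∈ UD U ↔ bigU U ℱ ∈ 𝒢 ∧ bigU U 𝒢 ∈ ℱ) := by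
    intro U
    rw [bigU_eq, bigU_eq]
    simp only [UD, mem_setOf_eq]
    constructor
    · rintro ⟨⟨h1, h2⟩, h3, h4⟩
      exact ⟨𝒢.inter_sets h4 h1, ℱ.inter_sets h2 h3⟩
    · rintro ⟨h1, h2⟩
      exact ⟨⟨Filter.mem_of_superset h1 inter_subset_right,
              Filter.mem_of_superset h2 inter_subset_left⟩,
             Filter.mem_of_superset h2 inter_subset_right,
             Filter.mem_of_superset h1 inter_subset_left⟩
  have hleF : ℱ ≤ filterU 𝒰 ℱ := by
    rw [filterU, Filter.le_generate_iff]
    rintro S ⟨U, hU, rfl⟩; exact hℱ U hU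
  have hleG : 𝒢 ≤ filterU 𝒰 𝒢 := by
    rw [filterU, Filter.le_generate_iff]
    rintro S ⟨U, hU, rfl⟩; exact h𝒢 U hU
  constructor
  · intro h
    have h' : ∀ U ∈ 𝒰, bigU U ℱ ∈ 𝒢 ∧ bigU U 𝒢 ∈ ℱ := fun U hU => (hUDequiv U).1 (h U hU)
    apply le_antisymm
    · simp only [filterU]
      rw [Filter.le_generate_iff]
      rintro S ⟨U, hU, rfl⟩
      obtain ⟨V, hV, hVU⟩ := h𝒰.comp U hU
      exact Filter.mem_of_superset (Filter.mem_generate_of_mem ⟨V, hV, rfl⟩)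
        (key_subset_s15 U V hVU ℱ 𝒢 (h' V hV).2)
    · simp only [filterU]
      rw [Filter.le_generate_iff]
      rintro S ⟨U, hU, rfl⟩
      obtain ⟨V, hV, hVU⟩ := h𝒰.comp U hU
      exact Filter.mem_of_superset (Filter.mem_generate_of_mem ⟨V, hV, rfl⟩)
        (key_subset_s15 U V hVU 𝒢 ℱ (h' V hV).1)
  · intro heq U hU
    apply (hUDequiv U).2
    constructor
    · exact hleG (heq ▸ Filter.mem_generate_of_mem ⟨U, hU, rfl⟩)
    · exact hleF (heq ▸ Filter.mem_generate_of_mem ⟨U, hU, rfl⟩)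
end
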